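/- Let U ∈ ℝ^{n×r} be entrywise nonnegative and let G ∈ ℝ^{n×r} be such that P_U⁺(G) ≠ 0. Then Z* = P_U⁺(G)/‖P_U⁺(G)‖_F² is the unique solution of the problem: minimize ‖Z‖_F over all Z ∈ ℝ^{n×r} satisfying ⟨Z, G⟩ = 1 and Z_{ij} ≥ 0 for every (i,j) with U_{ij} = 0. That is, Z* is feasible, every feasible Z satisfies ‖Z*‖_F ≤ ‖Z‖_F, and equality holds only for Z = Z*. In particular ⟨G, P_U⁺(G)⟩ = ‖P_U⁺(G)‖_F². -/
import Mathlib


open Matrix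

/-- Frobenius inner product `⟨A,B⟩ = trace(AᵀB) = ∑_{i,j} A_{ij} B_{ij}`. -/
def frobInner {n r : ℕ} (A B : Matrix (Fin n) (Fin r) ℝ) : ℝ :=
  ∑ i, ∑ j, A i j * B i j

/-- The projection `P_W⁺(Z)`: keeps `Z_{ij}` where `W_{ij} > 0` and takes
`max(0, Z_{ij})` where `W_{ij} = 0`. -/
noncomputable def Pplus {n r : ℕ} (W Z : Matrix (Fin n) (Fin r) ℝ) :
    Matrix (Fin n) (Fin r) ℝ :=
  fun i j => if 0 < W i j then Z i j else max 0 (Z i j)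

lemma frobInner_self_nonneg {n r : ℕ} (A : Matrix (Fin n) (Fin r) ℝ) :
    0 ≤ frobInner A A :=
  Finset.sum_nonneg fun _ _ => Finset.sum_nonneg fun _ _ => mul_self_nonneg _

lemma frobInner_self_eq_zero {n r : ℕ} {A : Matrix (Fin n) (Fin r) ℝ}
    (h : frobInner A A = 0) : A = 0 := by
  have h1 := (Finset.sum_eq_zero_iff_of_nonneg
    (fun i _ => Finset.sum_nonneg fun j _ => mul_self_nonneg (A i j))).mp h
  ext i j
  have h2 := (Finset.sum_eq_zero_iff_of_nonneg
    (fun j _ => mul_self_nonneg (A i j))).mp (h1 i (Finset.mem_univ i)) j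
    (Finset.mem_univ j)
  have := mul_self_eq_zero.mp h2
  simpa using this

lemma frobInner_comm {n r : ℕ} (A B : Matrix (Fin n) (Fin r) ℝ) :
    frobInner A B = frobInner B A := by
  unfold frobInner
  exact Finset.sum_congr rfl fun i _ => Finset.sum_congr rfl fun j _ => mul_comm _ _

lemma frobInner_smul_left {n r : ℕ} (c : ℝ) (A B : Matrix (Fin n) (Fin r) ℝ) :
    frobInner (c • A) B = c * frobInner A B := by
  unfold frobInner
  rw [Finset.mul_sum]
  refine Finset.sum_congr rfl fun i _ => ?_
  rw [Finset.mul_sum]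
  refine Finset.sum_congr rfl fun j _ => ?_
  simp [Matrix.smul_apply]
  ring

lemma frobInner_sub_self {n r : ℕ} (A B : Matrix (Fin n) (Fin r) ℝ) :
    frobInner (A - B) (A - B)
      = frobInner A A - 2 * frobInner A B + frobInner B B := by
  unfold frobInner
  rw [Finset.mul_sum, ← Finset.sum_sub_distrib, ← Finset.sum_add_distrib]
  refine Finset.sum_congr rfl fun i _ => ?_
  rw [Finset.mul_sum, ← Finset.sum_sub_distrib, ← Finset.sum_add_distrib]
  refine Finset.sum_congr rfl fun j _ => ?_
  simp [Matrix.sub_apply]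
  ring

/-- `Z* = P_U⁺(G)/‖P_U⁺(G)‖_F²` is the unique solution of
`min ‖Z‖_F  s.t.  ⟨Z,G⟩ = 1, Z_{ij} ≥ 0 whenever U_{ij} = 0`;
moreover `⟨G, P_U⁺(G)⟩ = ‖P_U⁺(G)‖_F²`. -/
theorem min_frobenius_norm_solution {n r : ℕ}
    (U G : Matrix (Fin n) (Fin r) ℝ)
    (hU : ∀ i j, 0 ≤ U i j) (hG : Pplus U G ≠ 0) :
    let D := Pplus U G
    let Zstar := (frobInner D D)⁻¹ • D
    -- feasibility
    (frobInner Zstar G = 1 ∧ ∀ i j, U i j = 0 → 0 ≤ Zstar i j) ∧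
    -- minimality
    (∀ Z : Matrix (Fin n) (Fin r) ℝ, frobInner Z G = 1 →
      (∀ i j, U i j = 0 → 0 ≤ Z i j) →
      Real.sqrt (frobInner Zstar Zstar) ≤ Real.sqrt (frobInner Z Z)) ∧
    -- uniqueness
    (∀ Z : Matrix (Fin n) (Fin r) ℝ, frobInner Z G = 1 →
      (∀ i j, U i j = 0 → 0 ≤ Z i j) →
      Real.sqrt (frobInner Zstar Zstar) = Real.sqrt (frobInner Z Z) → Z = Zstar) ∧
    -- in particular
    frobInner G D = frobInner D D := by
  intro D Zstar
  have hD : D = Pplus U G := rfl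
  have hZ : Zstar = (frobInner D D)⁻¹ • D := rfl
  set S := frobInner D D with hS
  -- S positive
  have hSne : S ≠ 0 := fun h => hG (hD ▸ frobInner_self_eq_zero (hS ▸ h))
  have hSpos : 0 < S := lt_of_le_of_ne (frobInner_self_nonneg D) (Ne.symm hSne)
  -- ⟨G, D⟩ = ⟨D, D⟩
  have hGD : frobInner G D = S := by
    rw [hS]
    unfold frobInner
    refine Finset.sum_congr rfl fun i _ => Finset.sum_congr rfl fun j _ => ?_
    rw [hD]
    unfold Pplus
    by_cases h : 0 < U i j
    · simp [h]
    · simp only [h, if_false]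
      rcases le_or_gt 0 (G i j) with hg | hg
      · rw [max_eq_right hg]
      · rw [max_eq_left hg.le]; ring
  -- entries of D at zero entries of U are nonneg
  have hDnn : ∀ i j, U i j = 0 → 0 ≤ D i j := by
    intro i j h
    rw [hD]
    unfold Pplus
    simp [h, le_max_left]
  -- key inequality: feasible Z has ⟨Z, D⟩ ≥ 1
  have hkey : ∀ Z : Matrix (Fin n) (Fin r) ℝ, frobInner Z G = 1 →
      (∀ i j, U i j = 0 → 0 ≤ Z i j) → 1 ≤ frobInner Z D := by
    intro Z h1 h2
    rw [← h1]
    unfold frobInner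
    refine Finset.sum_le_sum fun i _ => Finset.sum_le_sum fun j _ => ?_
    rw [hD]
    unfold Pplus
    by_cases h : 0 < U i j
    · simp [h]
    · simp only [h, if_false]
      have hU0 : U i j = 0 := le_antisymm (not_lt.mp h) (hU i j)
      exact mul_le_mul_of_nonneg_left (le_max_right _ _) (h2 i j hU0)
  -- ⟨Zstar, Zstar⟩ = S⁻¹
  have hZZ : frobInner Zstar Zstar = S⁻¹ := by
    rw [hZ, frobInner_smul_left, frobInner_comm, frobInner_smul_left, ← hS]
    field_simp
  -- ⟨Z, Zstar⟩ = S⁻¹ * ⟨Z, D⟩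
  have hZin : ∀ Z : Matrix (Fin n) (Fin r) ℝ,
      frobInner Z Zstar = S⁻¹ * frobInner Z D := by
    intro Z
    rw [frobInner_comm, hZ, frobInner_smul_left, frobInner_comm]
  -- feasibility of Zstar
  have hfeas1 : frobInner Zstar G = 1 := by
    rw [hZ, frobInner_smul_left, frobInner_comm, hGD]
    field_simp
  have hfeas2 : ∀ i j, U i j = 0 → 0 ≤ Zstar i j := by
    intro i j h
    rw [hZ]
    have : (0:ℝ) ≤ S⁻¹ := inv_nonneg.mpr hSpos.le
    simpa [Matrix.smul_apply] using mul_nonneg this (hDnn i j h)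
  -- minimality of norm squared
  have hmin : ∀ Z : Matrix (Fin n) (Fin r) ℝ, frobInner Z G = 1 →
      (∀ i j, U i j = 0 → 0 ≤ Z i j) →
      frobInner Zstar Zstar ≤ frobInner Z Z := by
    intro Z h1 h2
    have hZD := hkey Z h1 h2
    have hexp := frobInner_sub_self Z Zstar
    have hnn := frobInner_self_nonneg (Z - Zstar)
    have hZZs : S⁻¹ ≤ frobInner Z Zstar := by
      rw [hZin Z]
      calc S⁻¹ = S⁻¹ * 1 := by ring
        _ ≤ S⁻¹ * frobInner Z D :=
          mul_le_mul_of_nonneg_left hZD (inv_nonneg.mpr hSpos.le)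
    rw [hZZ]
    nlinarith [hexp, hnn, hZZ]
  refine ⟨⟨hfeas1, hfeas2⟩, ?_, ?_, hGD⟩
  · intro Z h1 h2
    exact Real.sqrt_le_sqrt (hmin Z h1 h2)
  · intro Z h1 h2 heq
    have hZD := hkey Z h1 h2
    have hZZeq : frobInner Z Z = frobInner Zstar Zstar := by
      have ha := frobInner_self_nonneg Zstar
      have hb := frobInner_self_nonneg Z
      have := congrArg (fun x => x ^ 2) heq
      simpa [Real.sq_sqrt, ha, hb] using this.symm
    have hexp := frobInner_sub_self Z Zstar
    have hnn := frobInner_self_nonneg (Z - Zstar)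
    have hZZs : S⁻¹ ≤ frobInner Z Zstar := by
      rw [hZin Z]
      calc S⁻¹ = S⁻¹ * 1 := by ring
        _ ≤ S⁻¹ * frobInner Z D :=
          mul_le_mul_of_nonneg_left hZD (inv_nonneg.mpr hSpos.le)
    have hzero : frobInner (Z - Zstar) (Z - Zstar) = 0 := by
      nlinarith [hexp, hnn, hZZ, hZZeq]
    have := frobInner_self_eq_zero hzero
    have := sub_eq_zero.mp this
    exact this
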